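/- For every integer r ≥ 3 there exists n₀ ∈ ℕ such that for all n ≥ n₀ the following holds. Let δ = 1/(34·log₂ n), let ξ be a real number with 0 < ξ < (log₂ r − 1)·n^{−1/3}·log₂ n + δ, and let A ⊆ [n] with |A| = (1 − ξ)n. For fixed distinct colors i, j ∈ [r], let 𝒫_{i,j} be the set of good r-templates P of A such that |{x ∈ [n] : P(x) = {i, j}}| ≥ (1 − 2δ)n. Then the number of rainbow 3-AP-free r-colorings of A that are subtemplates of some P ∈ 𝒫_{i,j} is at most 2^{|A|}·(1 + 2^{−n/240}). -/

import Mathlib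

/-- A coloring `c : A → Fin r` is rainbow 3-AP-free if no 3-AP of `A`
receives three pairwise distinct colors. -/
def RainbowAPFree {r : ℕ} (A : Finset ℕ) (c : A → Fin r) : Prop :=
  ∀ a d : ℕ, 0 < d → ∀ (h1 : a ∈ A) (h2 : a + d ∈ A) (h3 : a + 2 * d ∈ A),
    c ⟨a, h1⟩ = c ⟨a + d, h2⟩ ∨ c ⟨a + d, h2⟩ = c ⟨a + 2 * d, h3⟩ ∨
      c ⟨a, h1⟩ = c ⟨a + 2 * d, h3⟩

/-- `fAP n` is the number of 3-APs in `[n] = {1, …, n}`. -/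
def fAP (n : ℕ) : ℕ :=
  (((Finset.Icc 1 n) ×ˢ (Finset.Icc 1 n)).filter
    fun p => p.1 + p.2 ∈ Finset.Icc 1 n ∧ p.1 + 2 * p.2 ∈ Finset.Icc 1 n).card

/-- `Rtemp n P` is the number of pairs consisting of a 3-AP `(a, a+d, a+2d)` of
`[n]` together with pairwise distinct colors `i ∈ P a`, `j ∈ P (a+d)`,
`ℓ ∈ P (a+2d)`. -/
def Rtemp {r : ℕ} (n : ℕ) (P : ℕ → Finset (Fin r)) : ℕ :=
  ((((Finset.Icc 1 n) ×ˢ (Finset.Icc 1 n)) ×ˢ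
      ((Finset.univ : Finset (Fin r)) ×ˢ Finset.univ ×ˢ Finset.univ)).filter
    fun t => t.1.1 + 2 * t.1.2 ≤ n ∧ t.2.1 ∈ P t.1.1 ∧
      t.2.2.1 ∈ P (t.1.1 + t.1.2) ∧ t.2.2.2 ∈ P (t.1.1 + 2 * t.1.2) ∧
      t.2.1 ≠ t.2.2.1 ∧ t.2.2.1 ≠ t.2.2.2 ∧ t.2.1 ≠ t.2.2.2).card

/-- `P` is a good `r`-template of `A` (inside `[n]`) if every `x ∈ A` has a
nonempty palette and `R(P) ≤ n^{-1/3} · f(n)`. -/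
def GoodTemplate {r : ℕ} (n : ℕ) (A : Finset ℕ) (P : ℕ → Finset (Fin r)) : Prop :=
  (∀ x ∈ A, (P x).Nonempty) ∧
    (Rtemp n P : ℝ) ≤ (n : ℝ) ^ (-(1/3 : ℝ)) * fAP n

/-- `gPA A P` is the number of rainbow 3-AP-free `r`-colorings of `A` that are
subtemplates of `P`, i.e. with `c x ∈ P x` for every `x ∈ A`. -/
noncomputable def gPA {r : ℕ} (A : Finset ℕ) (P : ℕ → Finset (Fin r)) : ℕ :=
  Nat.card {c : A → Fin r // RainbowAPFree A c ∧
    ∀ (x : ℕ) (hx : x ∈ A), c ⟨x, hx⟩ ∈ P x}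


open Finset
lemma natCard_pi_mem {α β : Type*} [Fintype α] (pal : α → Finset β) :
    Nat.card {f : α → β // ∀ a, f a ∈ pal a} = ∏ a, (pal a).card := by
  rw [Nat.card_congr (Equiv.subtypePiEquivPi (p := fun a b => b ∈ pal a)), Nat.card_pi]
  exact Finset.prod_congr rfl fun a _ => by
    rw [Nat.card_eq_fintype_card, Fintype.card_coe]

lemma card_attach_filter_mem {A B : Finset ℕ} (hBA : B ⊆ A) (p : ℕ → Prop) [DecidablePred p]
    (hp : ∀ b ∈ B, p b) (hp' : ∀ b, p b → b ∈ B) :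
    ((Finset.univ : Finset {x // x ∈ A}).filter fun x => p x.1).card = B.card := by
  classical
  apply Finset.card_bij (fun (x : {x // x ∈ A}) _ => x.1)
  · intro a ha; exact hp' _ (mem_filter.1 ha).2
  · intro a _ b _ h; exact Subtype.ext h
  · intro b hb; exact ⟨⟨b, hBA hb⟩, mem_filter.2 ⟨mem_univ _, hp b hb⟩, rfl⟩

lemma lemB {r n : ℕ} (A B : Finset ℕ) (hBA : B ⊆ A)
    (i j : Fin r) (hij : i ≠ j)
    (x₀ : ℕ) (hx₀B : x₀ ∈ B)
    (p₁ p₂ : ℕ → ℕ) (Dset : Finset ℕ)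
    (hp₂inj : Set.InjOn p₂ ↑Dset)
    (hdisj : ∀ d ∈ Dset, ∀ d' ∈ Dset, p₁ d ≠ p₂ d')
    (hAP : ∀ d ∈ Dset, ∀ c : A → Fin r, RainbowAPFree A c →
        ∀ (h0 : x₀ ∈ A) (h1 : p₁ d ∈ A) (h2 : p₂ d ∈ A),
          c ⟨x₀, h0⟩ ≠ c ⟨p₁ d, h1⟩ → c ⟨x₀, h0⟩ ≠ c ⟨p₂ d, h2⟩ →
          c ⟨p₁ d, h1⟩ = c ⟨p₂ d, h2⟩) :
    ∃ m : ℕ,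
      A.card = B.card + (Dset.filter fun d => p₁ d ∈ A \ B ∧ p₂ d ∈ A \ B).card + m ∧
      Nat.card {c : A → Fin r // RainbowAPFree A c ∧
          ∀ x : A, (c x ∉ ({i, j} : Finset (Fin r)) ↔ (x : ℕ) ∈ B)} ≤
        r ^ B.card * 2 ^ m := by
  classical
  set Dg : Finset ℕ := Dset.filter (fun d => p₁ d ∈ A \ B ∧ p₂ d ∈ A \ B) with hDg
  set P₂ : Finset ℕ := Dg.image p₂ with hP₂
  have hDgsub : Dg ⊆ Dset := filter_subset _ _
  have hP₂card : P₂.card = Dg.card :=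
    Finset.card_image_of_injOn (hp₂inj.mono (by exact_mod_cast hDgsub))
  have hP₂mem : ∀ y ∈ P₂, y ∈ A ∧ y ∉ B := by
    intro y hy
    obtain ⟨d, hd, rfl⟩ := mem_image.1 hy
    have := (mem_filter.1 hd).2.2
    exact ⟨(mem_sdiff.1 this).1, (mem_sdiff.1 this).2⟩
  have hc1 : ((Finset.univ : Finset {x // x ∈ A}).filter fun x => x.1 ∈ B).card = B.card :=
    card_attach_filter_mem hBA _ (fun b hb => hb) (fun b hb => hb)
  have hc2 : ((Finset.univ : Finset {x // x ∈ A}).filter fun x => ¬ x.1 ∈ B ∧ x.1 ∈ P₂).card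
      = P₂.card :=
    card_attach_filter_mem (fun y hy => (hP₂mem y hy).1) (fun b => ¬ b ∈ B ∧ b ∈ P₂)
      (fun b hb => ⟨(hP₂mem b hb).2, hb⟩) (fun b hb => hb.2)
  set m : ℕ := ((Finset.univ : Finset {x // x ∈ A}).filter
      fun x => ¬ x.1 ∈ B ∧ ¬ x.1 ∈ P₂).card with hm
  have hcardsplit : A.card = B.card + Dg.card + m := by
    have h1 := Finset.card_filter_add_card_filter_not
      (s := (Finset.univ : Finset {x // x ∈ A})) (p := fun x => x.1 ∈ B)
    have h2 := Finset.card_filter_add_card_filter_not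
      (s := (Finset.univ : Finset {x // x ∈ A}).filter fun x => ¬ x.1 ∈ B)
      (p := fun x => x.1 ∈ P₂)
    rw [Finset.filter_filter, Finset.filter_filter] at h2
    have huniv : (Finset.univ : Finset {x // x ∈ A}).card = A.card := by
      rw [Finset.card_univ, Fintype.card_coe]
    rw [hc1, huniv] at h1
    rw [hc2] at h2
    omega
  refine ⟨m, hcardsplit, ?_⟩
  set pal : {x // x ∈ A} → Finset (Fin r) := fun x =>
    if x.1 ∈ B then Finset.univ else if x.1 ∈ P₂ then {i} else {i, j} with hpal
  have hinj : Nat.card {c : A → Fin r // RainbowAPFree A c ∧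
      ∀ x : A, (c x ∉ ({i, j} : Finset (Fin r)) ↔ (x : ℕ) ∈ B)} ≤
      Nat.card {f : A → Fin r // ∀ x, f x ∈ pal x} := by
    apply Nat.card_le_card_of_injective
      (f := fun c => ⟨fun x => if x.1 ∈ P₂ then i else c.1 x, by
        intro x
        rw [hpal]
        by_cases hxB : x.1 ∈ B
        · simp only [hxB, if_true]; exact mem_univ _
        · by_cases hx : x.1 ∈ P₂
          · simp only [hx, hxB, if_true, if_false]; exact mem_singleton_self i
          · simp only [hx, hxB, if_false]
            have := (c.2.2 x)
            by_contra hcon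
            exact hxB (this.1 hcon)⟩)
    rintro ⟨c, hcR, hcB⟩ ⟨c', hcR', hcB'⟩ h
    simp only [Subtype.mk.injEq] at h
    have hoff : ∀ x : {x // x ∈ A}, ¬ x.1 ∈ P₂ → c x = c' x := by
      intro x hx
      have := congrFun h x
      rwa [if_neg hx, if_neg hx] at this
    have h0 : x₀ ∈ A := hBA hx₀B
    have hcx₀ : c ⟨x₀, h0⟩ ∉ ({i, j} : Finset (Fin r)) := (hcB ⟨x₀, h0⟩).2 hx₀B
    have hcx₀' : c' ⟨x₀, h0⟩ ∉ ({i, j} : Finset (Fin r)) := (hcB' ⟨x₀, h0⟩).2 hx₀B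
    apply Subtype.ext
    funext x
    show c x = c' x
    by_cases hx : x.1 ∈ P₂
    · obtain ⟨d, hdDg, hpd⟩ := mem_image.1 hx
      have hdD : d ∈ Dset := hDgsub hdDg
      have hp1 : p₁ d ∈ A \ B := (mem_filter.1 hdDg).2.1
      have hp2 : p₂ d ∈ A \ B := (mem_filter.1 hdDg).2.2
      have h1 : p₁ d ∈ A := (mem_sdiff.1 hp1).1
      have h2 : p₂ d ∈ A := (mem_sdiff.1 hp2).1
      have hmem1 : c ⟨p₁ d, h1⟩ ∈ ({i, j} : Finset (Fin r)) := by
        by_contra hcon; exact (mem_sdiff.1 hp1).2 ((hcB ⟨p₁ d, h1⟩).1 hcon)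
      have hmem2 : c ⟨p₂ d, h2⟩ ∈ ({i, j} : Finset (Fin r)) := by
        by_contra hcon; exact (mem_sdiff.1 hp2).2 ((hcB ⟨p₂ d, h2⟩).1 hcon)
      have hmem1' : c' ⟨p₁ d, h1⟩ ∈ ({i, j} : Finset (Fin r)) := by
        by_contra hcon; exact (mem_sdiff.1 hp1).2 ((hcB' ⟨p₁ d, h1⟩).1 hcon)
      have hmem2' : c' ⟨p₂ d, h2⟩ ∈ ({i, j} : Finset (Fin r)) := by
        by_contra hcon; exact (mem_sdiff.1 hp2).2 ((hcB' ⟨p₂ d, h2⟩).1 hcon)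
      have e1 : c ⟨p₁ d, h1⟩ = c ⟨p₂ d, h2⟩ :=
        hAP d hdD c hcR h0 h1 h2 (fun he => hcx₀ (he ▸ hmem1)) (fun he => hcx₀ (he ▸ hmem2))
      have e1' : c' ⟨p₁ d, h1⟩ = c' ⟨p₂ d, h2⟩ :=
        hAP d hdD c' hcR' h0 h1 h2 (fun he => hcx₀' (he ▸ hmem1')) (fun he => hcx₀' (he ▸ hmem2'))
      have hp1nP₂ : ¬ p₁ d ∈ P₂ := by
        intro hcon
        obtain ⟨d', hd', hpd'⟩ := mem_image.1 hcon
        exact hdisj d hdD d' (hDgsub hd') hpd'.symm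
      have hoff1 : c ⟨p₁ d, h1⟩ = c' ⟨p₁ d, h1⟩ := hoff ⟨p₁ d, h1⟩ hp1nP₂
      have hxeq : x = (⟨p₂ d, h2⟩ : {x // x ∈ A}) := Subtype.ext hpd.symm
      rw [hxeq, ← e1, hoff1, e1']
    · exact hoff x hx
  refine hinj.trans ?_
  rw [natCard_pi_mem]
  have hcongr : ∀ x ∈ (Finset.univ : Finset {x // x ∈ A}), (pal x).card =
      (if x.1 ∈ B then r else if x.1 ∈ P₂ then 1 else 2) := by
    intro x _
    rw [hpal]
    by_cases hxB : x.1 ∈ B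
    · simp only [hxB, if_true]; rw [Finset.card_univ, Fintype.card_fin]
    · by_cases hx : x.1 ∈ P₂
      · simp only [hxB, hx, if_true, if_false, Finset.card_singleton]
      · simp only [hxB, hx, if_false]; exact Finset.card_pair hij
  rw [Finset.prod_congr rfl hcongr, Finset.prod_ite, Finset.prod_const, Finset.prod_ite,
    Finset.prod_const, Finset.prod_const, hc1, Finset.filter_filter, Finset.filter_filter]
  rw [hc2]
  calc r ^ B.card * (1 ^ P₂.card * 2 ^ m) = r ^ B.card * 2 ^ m := by rw [one_pow, one_mul]
  _ ≤ _ := le_rfl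

lemma aux_filter_card (Dset U G : Finset ℕ) (p₁ p₂ : ℕ → ℕ)
    (h1 : Set.InjOn p₁ ↑Dset) (h2 : Set.InjOn p₂ ↑Dset)
    (hr : ∀ d ∈ Dset, p₁ d ∈ U ∧ p₂ d ∈ U) :
    Dset.card ≤ (Dset.filter fun d => p₁ d ∈ G ∧ p₂ d ∈ G).card + ((U \ G).card + (U \ G).card) := by
  classical
  have hsplit := Finset.card_filter_add_card_filter_not
    (s := Dset) (p := fun d => p₁ d ∈ G ∧ p₂ d ∈ G)
  have hsub : Dset.filter (fun d => ¬(p₁ d ∈ G ∧ p₂ d ∈ G)) ⊆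
      (Dset.filter fun d => p₁ d ∉ G) ∪ (Dset.filter fun d => p₂ d ∉ G) := by
    intro d hd
    simp only [mem_filter, mem_union] at hd ⊢
    tauto
  have hb1 : (Dset.filter fun d => p₁ d ∉ G).card ≤ (U \ G).card := by
    apply Finset.card_le_card_of_injOn p₁
    · intro d hd; replace hd := mem_filter.1 (mem_coe.1 hd); exact mem_sdiff.2 ⟨(hr d hd.1).1, hd.2⟩
    · exact h1.mono (by intro d hd; exact (mem_filter.1 hd).1)
  have hb2 : (Dset.filter fun d => p₂ d ∉ G).card ≤ (U \ G).card := by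
    apply Finset.card_le_card_of_injOn p₂
    · intro d hd; replace hd := mem_filter.1 (mem_coe.1 hd); exact mem_sdiff.2 ⟨(hr d hd.1).2, hd.2⟩
    · exact h2.mono (by intro d hd; exact (mem_filter.1 hd).1)
  have := (Finset.card_le_card hsub).trans (Finset.card_union_le _ _)
  omega

/-- auxiliary color choices -/
def ee1 {r : ℕ} (i j : Fin r) (ε : ℕ) : Fin r := if ε = 0 then i else j
def ee2 {r : ℕ} (i j : Fin r) (ε : ℕ) : Fin r := if ε = 0 then j else i

lemma ee1_mem {r : ℕ} (i j : Fin r) (ε : ℕ) : ee1 i j ε ∈ ({i, j} : Finset (Fin r)) := by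
  unfold ee1; split_ifs
  · exact mem_insert_self _ _
  · exact mem_insert_of_mem (mem_singleton_self _)

lemma ee2_mem {r : ℕ} (i j : Fin r) (ε : ℕ) : ee2 i j ε ∈ ({i, j} : Finset (Fin r)) := by
  unfold ee2; split_ifs
  · exact mem_insert_of_mem (mem_singleton_self _)
  · exact mem_insert_self _ _

lemma ee12_ne {r : ℕ} {i j : Fin r} (hij : i ≠ j) (ε : ℕ) : ee1 i j ε ≠ ee2 i j ε := by
  unfold ee1 ee2; split_ifs
  · exact hij
  · exact hij.symm

lemma ee1_inj {r : ℕ} {i j : Fin r} (hij : i ≠ j) {ε ε' : ℕ}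
    (hε : ε = 0 ∨ ε = 1) (hε' : ε' = 0 ∨ ε' = 1) (h : ee1 i j ε = ee1 i j ε') : ε = ε' := by
  unfold ee1 at h
  rcases hε with rfl | rfl <;> rcases hε' with rfl | rfl <;> simp at h <;> first
    | rfl
    | exact absurd h hij
    | exact absurd h.symm hij

/-- AP partner points -/
def pa (n x d : ℕ) : ℕ := if x ≤ n/2 then x + d else x - 2*d
def pb (n x d : ℕ) : ℕ := if x ≤ n/2 then x + 2*d else x - d

/-- third color choice -/
noncomputable def ll {r : ℕ} (P : ℕ → Finset (Fin r)) (i j : Fin r) (x : ℕ) : Fin r :=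
  if h : ∃ l, l ∈ P x ∧ l ∉ ({i, j} : Finset (Fin r)) then h.choose else i

lemma ll_spec {r : ℕ} (P : ℕ → Finset (Fin r)) (i j : Fin r) (x : ℕ)
    (hx : ¬ P x ⊆ {i, j}) : ll P i j x ∈ P x ∧ ll P i j x ∉ ({i, j} : Finset (Fin r)) := by
  obtain ⟨l, hl1, hl2⟩ := Finset.not_subset.1 hx
  have hex : ∃ l, l ∈ P x ∧ l ∉ ({i, j} : Finset (Fin r)) := ⟨l, hl1, hl2⟩
  unfold ll
  rw [dif_pos hex]
  exact hex.choose_spec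

/-- the tuple map -/
noncomputable def gg {r : ℕ} (n : ℕ) (P : ℕ → Finset (Fin r)) (i j : Fin r)
    (t : Σ _ : ℕ, ℕ × ℕ) : (ℕ × ℕ) × (Fin r × Fin r × Fin r) :=
  if t.1 ≤ n/2 then ((t.1, t.2.1), (ll P i j t.1, ee1 i j t.2.2, ee2 i j t.2.2))
  else ((t.1 - 2*t.2.1, t.2.1), (ee1 i j t.2.2, ee2 i j t.2.2, ll P i j t.1))

lemma lemC {r n : ℕ} (P : ℕ → Finset (Fin r)) (i j : Fin r) (hij : i ≠ j) :
    (((Finset.Icc 1 n).filter fun x => ¬ P x ⊆ {i, j}).card) *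
      (2 * (n/8 - 2 * (n - ((Finset.Icc 1 n).filter fun x => P x = {i, j}).card))) ≤
      Rtemp n P := by
  classical
  set S : Finset ℕ := (Finset.Icc 1 n).filter (fun x => P x = {i, j}) with hS
  set T : Finset ℕ := (Finset.Icc 1 n).filter (fun x => ¬ P x ⊆ {i, j}) with hT
  have hSP : ∀ y ∈ S, P y = {i, j} := fun y hy => (mem_filter.1 hy).2
  set goodD : ℕ → Finset ℕ := fun x =>
    (Finset.Ioc (n/8) (2*(n/8))).filter (fun d => pa n x d ∈ S ∧ pb n x d ∈ S) with hgoodD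
  set Dom : Finset (Σ _ : ℕ, ℕ × ℕ) :=
    T.sigma (fun x => (goodD x) ×ˢ ({0, 1} : Finset ℕ)) with hDom
  have hmemDom : ∀ t ∈ Dom, t.1 ∈ Finset.Icc 1 n ∧ ¬ P t.1 ⊆ {i, j} ∧
      n/8 < t.2.1 ∧ t.2.1 ≤ 2*(n/8) ∧ pa n t.1 t.2.1 ∈ S ∧ pb n t.1 t.2.1 ∈ S ∧
      (t.2.2 = 0 ∨ t.2.2 = 1) := by
    intro t ht
    rw [hDom] at ht
    obtain ⟨ht1, ht2⟩ := Finset.mem_sigma.1 ht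
    obtain ⟨htd, htε⟩ := Finset.mem_product.1 ht2
    rw [hgoodD] at htd
    obtain ⟨htIoc, htS⟩ := mem_filter.1 htd
    obtain ⟨hd1, hd2⟩ := Finset.mem_Ioc.1 htIoc
    refine ⟨(mem_filter.1 ht1).1, (mem_filter.1 ht1).2, hd1, hd2, htS.1, htS.2, ?_⟩
    have := Finset.mem_insert.1 htε
    simpa using this
  have hstepA : Dom.card ≤ Rtemp n P := by
    apply Finset.card_le_card_of_injOn (gg n P i j)
    · intro t ht
      obtain ⟨htIcc, hPx, hd1, hd2, hpaS, hpbS, hε⟩ := hmemDom t ht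
      obtain ⟨hx1, hx2⟩ := Finset.mem_Icc.1 htIcc
      have hℓt := ll_spec P i j t.1 hPx
      unfold gg
      by_cases hdir : t.1 ≤ n/2
      · rw [if_pos hdir]
        rw [pa, if_pos hdir] at hpaS
        rw [pb, if_pos hdir] at hpbS
        refine mem_filter.2 ⟨?_, ?_⟩
        · refine Finset.mem_product.2 ⟨Finset.mem_product.2 ⟨htIcc, ?_⟩, ?_⟩
          · exact Finset.mem_Icc.2 (show 1 ≤ t.2.1 ∧ t.2.1 ≤ n by omega)
          · exact Finset.mem_product.2 ⟨mem_univ _, Finset.mem_product.2 ⟨mem_univ _, mem_univ _⟩⟩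
        · refine ⟨show t.1 + 2 * t.2.1 ≤ n by omega, hℓt.1, ?_, ?_, ?_, ?_, ?_⟩
          · show ee1 i j t.2.2 ∈ P (t.1 + t.2.1)
            rw [hSP _ hpaS]; exact ee1_mem _ _ _
          · show ee2 i j t.2.2 ∈ P (t.1 + 2 * t.2.1)
            rw [hSP _ hpbS]; exact ee2_mem _ _ _
          · exact show ll P i j t.1 ≠ ee1 i j t.2.2 from
              fun he => hℓt.2 (he ▸ ee1_mem i j t.2.2)
          · exact show ee1 i j t.2.2 ≠ ee2 i j t.2.2 from ee12_ne hij _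
          · exact show ll P i j t.1 ≠ ee2 i j t.2.2 from
              fun he => hℓt.2 (he ▸ ee2_mem i j t.2.2)
      · rw [if_neg hdir]
        rw [pa, if_neg hdir] at hpaS
        rw [pb, if_neg hdir] at hpbS
        have ea : t.1 - 2*t.2.1 + t.2.1 = t.1 - t.2.1 := by omega
        have eb : t.1 - 2*t.2.1 + 2*t.2.1 = t.1 := by omega
        refine mem_filter.2 ⟨?_, ?_⟩
        · refine Finset.mem_product.2 ⟨Finset.mem_product.2 ⟨?_, ?_⟩, ?_⟩
          · exact Finset.mem_Icc.2 (show 1 ≤ t.1 - 2*t.2.1 ∧ t.1 - 2*t.2.1 ≤ n by omega)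
          · exact Finset.mem_Icc.2 (show 1 ≤ t.2.1 ∧ t.2.1 ≤ n by omega)
          · exact Finset.mem_product.2 ⟨mem_univ _, Finset.mem_product.2 ⟨mem_univ _, mem_univ _⟩⟩
        · refine ⟨show t.1 - 2*t.2.1 + 2 * t.2.1 ≤ n by omega, ?_, ?_, ?_, ?_, ?_, ?_⟩
          · show ee1 i j t.2.2 ∈ P (t.1 - 2*t.2.1)
            rw [hSP _ hpaS]; exact ee1_mem _ _ _
          · show ee2 i j t.2.2 ∈ P (t.1 - 2*t.2.1 + t.2.1)
            rw [ea, hSP _ hpbS]; exact ee2_mem _ _ _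
          · show ll P i j t.1 ∈ P (t.1 - 2*t.2.1 + 2*t.2.1)
            rw [eb]; exact hℓt.1
          · exact show ee1 i j t.2.2 ≠ ee2 i j t.2.2 from ee12_ne hij _
          · exact show ee2 i j t.2.2 ≠ ll P i j t.1 from
              fun he => hℓt.2 (he.symm ▸ ee2_mem i j t.2.2)
          · exact show ee1 i j t.2.2 ≠ ll P i j t.1 from
              fun he => hℓt.2 (he.symm ▸ ee1_mem i j t.2.2)
    · intro t ht t' ht' hgt
      obtain ⟨htIcc, hPx, hd1, hd2, hpaS, hpbS, hε⟩ := hmemDom t ht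
      obtain ⟨htIcc', hPx', hd1', hd2', hpaS', hpbS', hε'⟩ := hmemDom t' ht'
      obtain ⟨hx1, hx2⟩ := Finset.mem_Icc.1 htIcc
      obtain ⟨hx1', hx2'⟩ := Finset.mem_Icc.1 htIcc'
      have hℓt := ll_spec P i j t.1 hPx
      have hℓt' := ll_spec P i j t'.1 hPx'
      obtain ⟨x, d, ε⟩ := t
      obtain ⟨x', d', ε'⟩ := t'
      simp only at hd1 hd2 hd1' hd2' hε hε' hx1 hx2 hx1' hx2' hℓt hℓt'
      unfold gg at hgt
      simp only at hgt
      by_cases hdir : x ≤ n/2 <;> by_cases hdir' : x' ≤ n/2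
      · rw [if_pos hdir, if_pos hdir'] at hgt
        simp only [Prod.mk.injEq] at hgt
        obtain ⟨⟨hxx, hdd⟩, -, h2, -⟩ := hgt
        have hee : ε = ε' := ee1_inj hij hε hε' h2
        subst hxx; subst hdd; subst hee; rfl
      · rw [if_pos hdir, if_neg hdir'] at hgt
        simp only [Prod.mk.injEq] at hgt
        exact absurd (hgt.2.1 ▸ ee1_mem i j ε') hℓt.2
      · rw [if_neg hdir, if_pos hdir'] at hgt
        simp only [Prod.mk.injEq] at hgt
        exact absurd (hgt.2.1.symm ▸ ee1_mem i j ε) hℓt'.2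
      · rw [if_neg hdir, if_neg hdir'] at hgt
        simp only [Prod.mk.injEq] at hgt
        obtain ⟨⟨hxx, hdd⟩, h1, -, -⟩ := hgt
        subst hdd
        have hxeq : x = x' := by omega
        have hee : ε = ε' := ee1_inj hij hε hε' h1
        subst hxeq; subst hee; rfl
  have hstepB : ∀ x ∈ T, n/8 ≤ (goodD x).card + 2 * (n - S.card) := by
    intro x hx
    obtain ⟨hxIcc, hPx⟩ := mem_filter.1 hx
    obtain ⟨hx1, hx2⟩ := Finset.mem_Icc.1 hxIcc
    have hUS : ((Finset.Icc 1 n) \ S).card = n - S.card := by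
      have hsub : S ⊆ Finset.Icc 1 n := filter_subset _ _
      rw [Finset.card_sdiff_of_subset hsub, Nat.card_Icc]
      omega
    have haux := aux_filter_card (Finset.Ioc (n/8) (2*(n/8))) (Finset.Icc 1 n) S
      (pa n x) (pb n x) ?_ ?_ ?_
    · rw [Nat.card_Ioc, hUS] at haux
      have hcard : 2*(n/8) - n/8 = n/8 := by omega
      rw [hcard] at haux
      have hgx : goodD x = (Finset.Ioc (n/8) (2*(n/8))).filter
          (fun d => pa n x d ∈ S ∧ pb n x d ∈ S) := rfl
      rw [hgx]
      omega
    · intro d hd d' hd' h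
      simp only [Finset.coe_Ioc, Set.mem_Ioc] at hd hd'
      unfold pa at h
      split_ifs at h <;> omega
    · intro d hd d' hd' h
      simp only [Finset.coe_Ioc, Set.mem_Ioc] at hd hd'
      unfold pb at h
      split_ifs at h <;> omega
    · intro d hd
      obtain ⟨hd1, hd2⟩ := Finset.mem_Ioc.1 hd
      unfold pa pb
      split_ifs with hh <;>
        exact ⟨Finset.mem_Icc.2 ⟨by omega, by omega⟩, Finset.mem_Icc.2 ⟨by omega, by omega⟩⟩
  have hcardDom : Dom.card = ∑ x ∈ T, (goodD x).card * 2 := by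
    rw [hDom, Finset.card_sigma]
    refine Finset.sum_congr rfl (fun x _ => ?_)
    rw [Finset.card_product]
    congr 1
  calc T.card * (2 * (n/8 - 2 * (n - S.card)))
      = ∑ _x ∈ T, (2 * (n/8 - 2 * (n - S.card))) := by
        rw [Finset.sum_const, smul_eq_mul]
    _ ≤ ∑ x ∈ T, (goodD x).card * 2 := by
        refine Finset.sum_le_sum (fun x hx => ?_)
        have := hstepB x hx
        omega
    _ = Dom.card := hcardDom.symm
    _ ≤ Rtemp n P := hstepA

lemma logb_two_le (x : ℝ) (hx : 1 ≤ x) : Real.logb 2 x ≤ 2 * x := by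
  have h2 : (0:ℝ) < Real.log 2 := Real.log_pos one_lt_two
  have hhalf : (1/2 : ℝ) ≤ Real.log 2 := by
    have := Real.log_two_gt_d9
    linarith
  have hx0 : (0:ℝ) < x := lt_of_lt_of_le one_pos hx
  have hle : Real.log x ≤ x - 1 := Real.log_le_sub_one_of_pos hx0
  rw [Real.logb, div_le_iff₀ h2]
  nlinarith

lemma logb_two_le_rpow (x : ℝ) (hx : 1 ≤ x) : Real.logb 2 x ≤ 12 * x ^ ((1:ℝ)/6) := by
  have h2 : (0:ℝ) < Real.log 2 := Real.log_pos one_lt_two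
  have hhalf : (1/2 : ℝ) ≤ Real.log 2 := by
    have := Real.log_two_gt_d9
    linarith
  have hx0 : (0:ℝ) < x := lt_of_lt_of_le one_pos hx
  have hlog : Real.log (x ^ ((1:ℝ)/6)) = (1/6) * Real.log x := Real.log_rpow hx0 _
  have hle : Real.log (x ^ ((1:ℝ)/6)) ≤ x ^ ((1:ℝ)/6) := by
    have h := Real.log_le_sub_one_of_pos (Real.rpow_pos_of_pos hx0 ((1:ℝ)/6))
    linarith
  have hrnn : (0:ℝ) ≤ x ^ ((1:ℝ)/6) := le_of_lt (Real.rpow_pos_of_pos hx0 _)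
  rw [Real.logb, div_le_iff₀ h2]
  nlinarith

lemma pow_eq_rpow_logb (a : ℝ) (ha : 0 < a) (k : ℕ) :
    a ^ k = (2:ℝ) ^ ((k:ℝ) * Real.logb 2 a) := by
  conv_lhs => rw [← Real.rpow_logb two_pos (by norm_num) ha]
  rw [← Real.rpow_natCast ((2:ℝ) ^ Real.logb 2 a) k, ← Real.rpow_mul (by norm_num : (0:ℝ) ≤ 2)]
  ring_nf

set_option maxHeartbeats 1000000 in
lemma numeric_main (r n : ℕ) (hr : 3 ≤ r) (hn : ((100000*(r+1))^6 : ℕ) ≤ n)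
    (ξ : ℝ) (hξ0 : 0 ≤ ξ)
    (hξ : ξ ≤ (Real.logb 2 r - 1) * (n : ℝ) ^ (-(1/3 : ℝ)) * Real.logb 2 n
      + 1 / (34 * Real.logb 2 n)) :
    Real.logb 2 ((⌈5 * (n:ℝ) ^ ((2:ℝ)/3)⌉₊ : ℝ) + 1)
      + (⌈5 * (n:ℝ) ^ ((2:ℝ)/3)⌉₊ : ℝ) * Real.logb 2 n
      + (⌈5 * (n:ℝ) ^ ((2:ℝ)/3)⌉₊ : ℝ) * Real.logb 2 r
      - 1 - (↑(n/8) : ℝ) + 2 * (ξ * n) + 2 * (⌈5 * (n:ℝ) ^ ((2:ℝ)/3)⌉₊ : ℝ)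
      ≤ -(n:ℝ)/240 := by
  have hrr : (3:ℝ) ≤ (r:ℝ) := by exact_mod_cast hr
  set u : ℝ := (n:ℝ) ^ ((1:ℝ)/6) with hu
  have hM : ((100000*(r+1) : ℕ) : ℝ) = 100000*((r:ℝ)+1) := by push_cast; ring
  have hnM : ((100000*((r:ℝ)+1))^6) ≤ (n:ℝ) := by
    rw [← hM]
    calc (((100000*(r+1) : ℕ) : ℝ))^6 = (((100000*(r+1))^6 : ℕ) : ℝ) := by push_cast; ring
    _ ≤ (n:ℝ) := by exact_mod_cast hn
  have hMpos : (0:ℝ) < 100000*((r:ℝ)+1) := by positivity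
  have hM1 : (1:ℝ) ≤ 100000*((r:ℝ)+1) := by linarith
  have hn1 : (1:ℝ) ≤ (n:ℝ) := by
    have h16 : (1:ℝ)^6 ≤ (100000*((r:ℝ)+1))^6 := pow_le_pow_left₀ (by norm_num) hM1 6
    rw [one_pow] at h16
    linarith
  have hn0 : (0:ℝ) < (n:ℝ) := lt_of_lt_of_le one_pos hn1
  have huM : 100000*((r:ℝ)+1) ≤ u := by
    rw [hu]
    calc 100000*((r:ℝ)+1) = ((100000*((r:ℝ)+1))^6) ^ ((1:ℝ)/6) := by
          rw [← Real.rpow_natCast (100000*((r:ℝ)+1)) 6, ← Real.rpow_mul (le_of_lt hMpos)]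
          norm_num
    _ ≤ (n:ℝ) ^ ((1:ℝ)/6) := by
          apply Real.rpow_le_rpow (by positivity) hnM (by norm_num)
  have hu1 : (1:ℝ) ≤ u := by linarith
  have hu0 : (0:ℝ) < u := lt_of_lt_of_le one_pos hu1
  have hu6 : (n:ℝ) = u^6 := by
    rw [hu, ← Real.rpow_natCast ((n:ℝ) ^ ((1:ℝ)/6)) 6, ← Real.rpow_mul (le_of_lt hn0)]
    norm_num
  have hu4 : (n:ℝ) ^ ((2:ℝ)/3) = u^4 := by
    rw [hu, ← Real.rpow_natCast ((n:ℝ) ^ ((1:ℝ)/6)) 4, ← Real.rpow_mul (le_of_lt hn0)]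
    norm_num
  set K : ℕ := ⌈5 * (n:ℝ) ^ ((2:ℝ)/3)⌉₊ with hKdef
  have hK : (K:ℝ) ≤ 5*u^4 + 1 := by
    rw [hKdef, ← hu4]
    exact le_of_lt (Nat.ceil_lt_add_one (by positivity))
  have hK0 : (0:ℝ) ≤ (K:ℝ) := Nat.cast_nonneg K
  set Ln : ℝ := Real.logb 2 n with hLn
  set Lr : ℝ := Real.logb 2 r with hLr
  have hLnle : Ln ≤ 12*u := by rw [hLn, hu]; exact logb_two_le_rpow _ hn1
  have hLn0 : 0 ≤ Ln := Real.logb_nonneg one_lt_two hn1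
  have hLn100 : (100:ℝ) ≤ Ln := by
    have h2100 : ((2:ℝ))^(100:ℕ) ≤ (n:ℝ) := by
      have hnat : (2:ℕ)^100 ≤ n := by
        calc (2:ℕ)^100 ≤ (2^17)^6 := by norm_num
        _ ≤ (100000*(r+1))^6 := by
              apply Nat.pow_le_pow_left
              have : 4 ≤ r + 1 := by omega
              calc (2:ℕ)^17 = 131072 := by norm_num
              _ ≤ 100000*4 := by norm_num
              _ ≤ 100000*(r+1) := by omega
        _ ≤ n := hn
      exact_mod_cast hnat
    calc (100:ℝ) = Real.logb 2 ((2:ℝ)^(100:ℕ)) := by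
          rw [← Real.rpow_natCast (2:ℝ) 100, Real.logb_rpow (by norm_num) (by norm_num)]
          norm_num
    _ ≤ Ln := Real.logb_le_logb_of_le one_lt_two (by positivity) h2100
  have hLrle : Lr ≤ 2*(r:ℝ) := by
    rw [hLr]
    exact logb_two_le _ (by linarith)
  have hLr1 : (1:ℝ) ≤ Lr := by
    rw [hLr]
    have h22 : Real.logb 2 2 = 1 := by
      rw [Real.logb, div_self (ne_of_gt (Real.log_pos one_lt_two))]
    calc (1:ℝ) = Real.logb 2 2 := h22.symm
    _ ≤ Real.logb 2 r := Real.logb_le_logb_of_le one_lt_two (by norm_num) (by linarith)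
  have hLK1 : Real.logb 2 ((K:ℝ)+1) ≤ 2*((K:ℝ)+1) := logb_two_le _ (by linarith)
  -- bound on ξ * n
  have hm13 : (n:ℝ) ^ (-(1/3 : ℝ)) * (n:ℝ) = u^4 := by
    calc (n:ℝ) ^ (-(1/3 : ℝ)) * (n:ℝ) = (n:ℝ) ^ (-(1/3 : ℝ)) * (n:ℝ)^(1:ℝ) := by
          rw [Real.rpow_one]
    _ = (n:ℝ)^((2:ℝ)/3) := by rw [← Real.rpow_add hn0]; norm_num
    _ = u^4 := hu4
  have hm13nn : (0:ℝ) ≤ (n:ℝ) ^ (-(1/3 : ℝ)) := le_of_lt (Real.rpow_pos_of_pos hn0 _)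
  have hξn : ξ * (n:ℝ) ≤ 24*(r:ℝ)*u^5 + (n:ℝ)/3400 := by
    have h1 : ξ * (n:ℝ) ≤ ((Lr - 1) * (n : ℝ) ^ (-(1/3 : ℝ)) * Ln) * n + (1 / (34 * Ln)) * n := by
      have := mul_le_mul_of_nonneg_right hξ (le_of_lt hn0)
      linarith [this]
    have h2 : ((Lr - 1) * (n : ℝ) ^ (-(1/3 : ℝ)) * Ln) * n
        = (Lr - 1) * Ln * ((n:ℝ) ^ (-(1/3 : ℝ)) * n) := by ring
    have h3 : (Lr - 1) * Ln * ((n:ℝ) ^ (-(1/3 : ℝ)) * n) ≤ (2*(r:ℝ)) * (12*u) * u^4 := by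
      rw [hm13]
      have hLrm : Lr - 1 ≤ 2*(r:ℝ) := by linarith
      have hLrm0 : 0 ≤ Lr - 1 := by linarith
      have : (Lr - 1) * Ln ≤ (2*(r:ℝ)) * (12*u) := by
        apply mul_le_mul hLrm hLnle hLn0 (by linarith)
      apply mul_le_mul_of_nonneg_right this (by positivity)
    have h4 : (1 / (34 * Ln)) * n ≤ (n:ℝ)/3400 := by
      have h34 : (3400:ℝ) ≤ 34 * Ln := by linarith
      have : 1 / (34 * Ln) ≤ 1/3400 := by
        apply one_div_le_one_div_of_le (by norm_num) h34
      calc (1 / (34 * Ln)) * n ≤ (1/3400) * n := mul_le_mul_of_nonneg_right this (le_of_lt hn0)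
      _ = (n:ℝ)/3400 := by ring
    calc ξ * (n:ℝ) ≤ _ := h1
    _ ≤ (2*(r:ℝ)) * (12*u) * u^4 + (n:ℝ)/3400 := by linarith [h2 ▸ h3]
    _ = 24*(r:ℝ)*u^5 + (n:ℝ)/3400 := by ring
  have hn8 : (n:ℝ)/8 - 1 ≤ (↑(n/8) : ℝ) := by
    have h8 : n ≤ 8*(n/8) + 7 := by omega
    have : (n:ℝ) ≤ 8*(↑(n/8):ℝ) + 7 := by exact_mod_cast h8
    linarith
  -- final combination
  have hKLn : (K:ℝ) * Ln ≤ 60*u^5 + 12*u := by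
    calc (K:ℝ) * Ln ≤ (5*u^4+1)*(12*u) := mul_le_mul hK hLnle hLn0 (by positivity)
    _ = 60*u^5 + 12*u := by ring
  have hKLr : (K:ℝ) * Lr ≤ 10*((r:ℝ)*u^4) + 2*(r:ℝ) := by
    calc (K:ℝ) * Lr ≤ (5*u^4+1)*(2*(r:ℝ)) := mul_le_mul hK hLrle (by linarith) (by positivity)
    _ = 10*((r:ℝ)*u^4) + 2*(r:ℝ) := by ring
  have hLK : Real.logb 2 ((K:ℝ)+1) ≤ 10*u^4 + 4 := by
    calc Real.logb 2 ((K:ℝ)+1) ≤ 2*((K:ℝ)+1) := hLK1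
    _ ≤ 2*((5*u^4+1)+1) := by linarith
    _ = 10*u^4 + 4 := by ring
  -- monomial comparisons
  have h1u5 : (1:ℝ) ≤ u^5 := one_le_pow₀ hu1
  have huu5 : u ≤ u^5 := by
    calc u = u^1 := (pow_one u).symm
    _ ≤ u^5 := pow_le_pow_right₀ hu1 (by norm_num)
  have hu45 : u^4 ≤ u^5 := pow_le_pow_right₀ hu1 (by norm_num)
  have hr0 : (0:ℝ) ≤ (r:ℝ) := by linarith
  have hr45 : (r:ℝ)*u^4 ≤ (r:ℝ)*u^5 := mul_le_mul_of_nonneg_left hu45 hr0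
  have hr05 : (r:ℝ) ≤ (r:ℝ)*u^5 := by
    calc (r:ℝ) = (r:ℝ)*1 := by ring
    _ ≤ (r:ℝ)*u^5 := mul_le_mul_of_nonneg_left h1u5 hr0
  have hξn2 : ξ * (n:ℝ) ≤ 24*((r:ℝ)*u^5) + (n:ℝ)/3400 := by linarith [hξn]
  have hfinal : 98*u^5 + 60*((r:ℝ)*u^5) ≤ u^6/10 := by
    have h980 : 10*(98+60*(r:ℝ)) ≤ u := by linarith
    have hu5nn : (0:ℝ) ≤ u^5 := by positivity
    have hmul : (98+60*(r:ℝ))*u^5 ≤ (u/10)*u^5 := by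
      apply mul_le_mul_of_nonneg_right (by linarith) hu5nn
    calc 98*u^5 + 60*((r:ℝ)*u^5) = (98+60*(r:ℝ))*u^5 := by ring
    _ ≤ (u/10)*u^5 := hmul
    _ = u^6/10 := by ring
  clear_value u K Ln Lr
  clear hu hKdef hLn hLr hξ hu4 hnM hn hM
  have hgoal2 : Real.logb 2 ((K:ℝ)+1) + (K:ℝ)*Ln + (K:ℝ)*Lr - 1 - (↑(n/8) : ℝ)
      + 2*(ξ*(n:ℝ)) + 2*(K:ℝ) ≤ -(n:ℝ)/240 := by
    linarith [hu6, hKLn, hKLr, hLK, hξn, hK, hn8, h1u5, huu5, hu45, hr45, hr05, hfinal]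
  linarith [hgoal2]


lemma natCard_subtype_eq_filter {α : Type*} [Fintype α] (p : α → Prop) [DecidablePred p] :
    Nat.card {x // p x} = (Finset.univ.filter p).card := by
  rw [Nat.card_eq_fintype_card, Fintype.card_subtype]

lemma fAP_le_sq (n : ℕ) : fAP n ≤ n^2 := by
  unfold fAP
  calc _ ≤ ((Finset.Icc 1 n) ×ˢ (Finset.Icc 1 n)).card := Finset.card_filter_le _ _
  _ = n^2 := by rw [Finset.card_product, Nat.card_Icc]; simp [pow_two]

lemma logb_ge_100 (r n : ℕ) (hr : 3 ≤ r) (hn : ((100000*(r+1))^6 : ℕ) ≤ n) :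
    (100:ℝ) ≤ Real.logb 2 n := by
  have h2100 : ((2:ℝ))^(100:ℕ) ≤ (n:ℝ) := by
    have hnat : (2:ℕ)^100 ≤ n := by
      calc (2:ℕ)^100 ≤ (2^17)^6 := by norm_num
      _ ≤ (100000*(r+1))^6 := by
            apply Nat.pow_le_pow_left
            calc (2:ℕ)^17 = 131072 := by norm_num
            _ ≤ 100000*4 := by norm_num
            _ ≤ 100000*(r+1) := by omega
      _ ≤ n := hn
    exact_mod_cast hnat
  calc (100:ℝ) = Real.logb 2 ((2:ℝ)^(100:ℕ)) := by
        rw [← Real.rpow_natCast (2:ℝ) 100, Real.logb_rpow (by norm_num) (by norm_num)]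
        norm_num
  _ ≤ Real.logb 2 n := Real.logb_le_logb_of_le one_lt_two (by positivity) h2100

set_option maxHeartbeats 1000000 in
theorem stmt_13 (r : ℕ) (hr : 3 ≤ r) :
    ∃ n₀ : ℕ, ∀ n : ℕ, n₀ ≤ n → ∀ δ ξ : ℝ, δ = 1 / (34 * Real.logb 2 n) →
      0 < ξ → ξ < (Real.logb 2 r - 1) * (n : ℝ) ^ (-(1/3 : ℝ)) * Real.logb 2 n + δ →
      ∀ A : Finset ℕ, A ⊆ Finset.Icc 1 n → (A.card : ℝ) = (1 - ξ) * n →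
      ∀ i j : Fin r, i ≠ j →
        (Nat.card {c : A → Fin r // RainbowAPFree A c ∧
            ∃ P : ℕ → Finset (Fin r), GoodTemplate n A P ∧
              (1 - 2 * δ) * n ≤
                (((Finset.Icc 1 n).filter fun x => P x = {i, j}).card : ℝ) ∧
              ∀ (x : ℕ) (hx : x ∈ A), c ⟨x, hx⟩ ∈ P x} : ℝ) ≤
          (2 : ℝ) ^ A.card * (1 + (2 : ℝ) ^ (-(n : ℝ) / 240)) := by
  refine ⟨(100000*(r+1))^6, ?_⟩
  intro n hn δ ξ hδ hξ0 hξlt A hA hcard i j hij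
  classical
  set K : ℕ := ⌈5 * (n:ℝ) ^ ((2:ℝ)/3)⌉₊ with hKdef
  have hn1 : 1 ≤ n := by
    have hp : 0 < (100000*(r+1))^6 := by positivity
    omega
  have hnR0 : (0:ℝ) < n := by exact_mod_cast hn1
  have hLn100 : (100:ℝ) ≤ Real.logb 2 n := logb_ge_100 r n hr hn
  have hAn : A.card ≤ n := by
    have := Finset.card_le_card hA
    rwa [Nat.card_Icc, Nat.add_sub_cancel] at this
  have hξn : ξ * n = (n:ℝ) - A.card := by rw [hcard]; ring
  have hδn : δ * n ≤ (n:ℝ)/3400 := by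
    rw [hδ]
    have h1 : 1/(34*Real.logb 2 n) ≤ 1/3400 :=
      one_div_le_one_div_of_le (by norm_num) (by linarith)
    calc 1/(34*Real.logb 2 n) * n ≤ 1/3400 * n :=
          mul_le_mul_of_nonneg_right h1 (le_of_lt hnR0)
    _ = (n:ℝ)/3400 := by ring
  have hn8R : (n:ℝ)/8 - 1 ≤ (↑(n/8):ℝ) := by
    have h8 : n ≤ 8*(n/8) + 7 := by omega
    have : (n:ℝ) ≤ 8*((↑(n/8)):ℝ) + 7 := by exact_mod_cast h8
    linarith
  have hnbig : (42000:ℝ) ≤ (n:ℝ) := by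
    have h1 : 42000 ≤ n := le_trans (by
      calc (42000:ℕ) ≤ 100000*(r+1) := by omega
      _ ≤ (100000*(r+1))^6 := Nat.le_self_pow (by norm_num) _) hn
    exact_mod_cast h1
  -- bound on the number of positions with a third color in the palette
  have hTK : ∀ P : ℕ → Finset (Fin r),
      (Rtemp n P : ℝ) ≤ (n : ℝ) ^ (-(1/3 : ℝ)) * fAP n →
      (1 - 2 * δ) * n ≤ (((Finset.Icc 1 n).filter fun x => P x = {i, j}).card : ℝ) →
      ((Finset.Icc 1 n).filter fun x => ¬ P x ⊆ {i, j}).card ≤ K := by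
    intro P hR hdens
    set Sc := ((Finset.Icc 1 n).filter fun x => P x = {i, j}).card with hScdef
    set Tc := ((Finset.Icc 1 n).filter fun x => ¬ P x ⊆ {i, j}).card with hTcdef
    have hScn : Sc ≤ n := by
      rw [hScdef]
      calc _ ≤ (Finset.Icc 1 n).card := Finset.card_filter_le _ _
      _ = n := by rw [Nat.card_Icc]; omega
    have hcast : (Tc:ℝ) * (2 * ((n/8 - 2*(n - Sc) : ℕ):ℝ)) ≤ Rtemp n P := by
      exact_mod_cast lemC (n := n) P i j hij
    have hSreal : ((n - Sc : ℕ):ℝ) ≤ 2*(δ*n) := by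
      rw [Nat.cast_sub hScn]
      linarith [hdens]
    have hinner : (n:ℝ)/10 ≤ ((n/8 - 2*(n - Sc) : ℕ):ℝ) := by
      have hsplit : n/8 ≤ (n/8 - 2*(n - Sc)) + 2*(n - Sc) := by omega
      have hsplitR : ((n/8 : ℕ):ℝ) ≤ ((n/8 - 2*(n - Sc) : ℕ):ℝ) + 2*((n - Sc : ℕ):ℝ) := by
        exact_mod_cast hsplit
      have h10 : (n:ℝ)/10 ≤ (n:ℝ)/8 - 1 - 4*(δ*n) := by
        have h4 : 4*(δ*n) ≤ 4*((n:ℝ)/3400) := by linarith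
        linarith
      linarith [hn8R]
    have hfAP : ((fAP n : ℕ):ℝ) ≤ (n:ℝ)^(2:ℕ) := by exact_mod_cast fAP_le_sq n
    have hRbound : (Rtemp n P : ℝ) ≤ (n:ℝ)^((2:ℝ)/3) * n := by
      have h1 : (n : ℝ) ^ (-(1/3 : ℝ)) * (fAP n : ℝ) ≤ (n : ℝ) ^ (-(1/3 : ℝ)) * (n:ℝ)^(2:ℕ) :=
        mul_le_mul_of_nonneg_left hfAP (le_of_lt (Real.rpow_pos_of_pos hnR0 _))
      have h2 : (n : ℝ) ^ (-(1/3 : ℝ)) * (n:ℝ)^(2:ℕ) = (n:ℝ)^((2:ℝ)/3) * n := by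
        rw [← Real.rpow_natCast (n:ℝ) 2, ← Real.rpow_add hnR0]
        calc (n:ℝ)^(-(1/3) + ((2:ℕ):ℝ)) = (n:ℝ)^((2:ℝ)/3 + 1) := by norm_num
        _ = (n:ℝ)^((2:ℝ)/3) * (n:ℝ)^(1:ℝ) := Real.rpow_add hnR0 _ _
        _ = (n:ℝ)^((2:ℝ)/3) * n := by rw [Real.rpow_one]
      linarith [hR]
    have hTc5 : (Tc:ℝ) ≤ 5*(n:ℝ)^((2:ℝ)/3) := by
      have hmono : (Tc:ℝ) * (2*((n:ℝ)/10)) ≤ (Tc:ℝ) * (2*((n/8 - 2*(n-Sc) : ℕ):ℝ)) := by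
        apply mul_le_mul_of_nonneg_left (by linarith) (Nat.cast_nonneg _)
      have hchain : (Tc:ℝ) * (2*((n:ℝ)/10)) ≤ (n:ℝ)^((2:ℝ)/3) * n :=
        le_trans hmono (le_trans hcast hRbound)
      have hTn : (Tc:ℝ) * n ≤ (5*(n:ℝ)^((2:ℝ)/3)) * n := by linarith [hchain]
      exact le_of_mul_le_mul_right hTn hnR0
    have hfin : (Tc:ℝ) ≤ (K:ℝ) := le_trans hTc5 (by rw [hKdef]; exact Nat.le_ceil _)
    exact_mod_cast hfin
  set G : Finset ℕ → Finset ({x // x ∈ A} → Fin r) := fun B =>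
    Finset.univ.filter (fun c => RainbowAPFree A c ∧
      ∀ x : {x // x ∈ A}, (c x ∉ ({i,j} : Finset (Fin r)) ↔ x.1 ∈ B)) with hGdef
  set I : Finset (Finset ℕ) := A.powerset.filter (fun B => B.card ≤ K) with hIdef
  set F : Finset ({x // x ∈ A} → Fin r) := Finset.univ.filter (fun c =>
    RainbowAPFree A c ∧ ∃ P : ℕ → Finset (Fin r), GoodTemplate n A P ∧
      (1 - 2*δ) * n ≤ (((Finset.Icc 1 n).filter fun x => P x = {i,j}).card : ℝ) ∧
      ∀ (x : ℕ) (hx : x ∈ A), c ⟨x, hx⟩ ∈ P x) with hFdef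
  have hFsub : F ⊆ I.biUnion G := by
    intro c hc
    obtain ⟨-, hRb, P, hgood, hdens, hsubt⟩ := Finset.mem_filter.1 hc
    set Bc : Finset ℕ := (Finset.univ.filter
      (fun x : {x // x ∈ A} => c x ∉ ({i,j} : Finset (Fin r)))).image (fun x => x.1) with hBcdef
    have hBcA : Bc ⊆ A := by
      intro y hy
      obtain ⟨x, -, rfl⟩ := Finset.mem_image.1 hy
      exact x.2
    have hBciff : ∀ x : {x // x ∈ A}, (c x ∉ ({i,j} : Finset (Fin r)) ↔ x.1 ∈ Bc) := by
      intro x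
      constructor
      · intro h; exact Finset.mem_image.2 ⟨x, Finset.mem_filter.2 ⟨Finset.mem_univ _, h⟩, rfl⟩
      · intro h
        obtain ⟨y, hy, hyx⟩ := Finset.mem_image.1 h
        have hxy : y = x := Subtype.ext hyx
        subst hxy
        exact (Finset.mem_filter.1 hy).2
    have hBcsub : Bc ⊆ (Finset.Icc 1 n).filter (fun x => ¬ P x ⊆ {i,j}) := by
      intro y hy
      obtain ⟨x, hxf, rfl⟩ := Finset.mem_image.1 hy
      refine Finset.mem_filter.2 ⟨hA x.2, ?_⟩
      intro hsub'
      have hcP : c x ∈ P x.1 := hsubt x.1 x.2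
      exact (Finset.mem_filter.1 hxf).2 (hsub' hcP)
    have hBcK : Bc.card ≤ K := le_trans (Finset.card_le_card hBcsub) (hTK P hgood.2 hdens)
    refine Finset.mem_biUnion.2 ⟨Bc, Finset.mem_filter.2 ⟨Finset.mem_powerset.2 hBcA, hBcK⟩, ?_⟩
    exact Finset.mem_filter.2 ⟨Finset.mem_univ _, hRb, hBciff⟩
  have h0I : ∅ ∈ I := Finset.mem_filter.2 ⟨Finset.empty_mem_powerset A, by simp⟩
  have hFbound : F.card ≤ (G ∅).card + ∑ B ∈ I.erase ∅, (G B).card := by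
    calc F.card ≤ (I.biUnion G).card := Finset.card_le_card hFsub
    _ ≤ ∑ B ∈ I, (G B).card := Finset.card_biUnion_le
    _ = (G ∅).card + ∑ B ∈ I.erase ∅, (G B).card := (Finset.add_sum_erase I _ h0I).symm
  -- per-B counting via lemB
  have key : ∀ B ∈ I.erase ∅, ∃ q m : ℕ,
      A.card = B.card + q + m ∧ 1 ≤ B.card ∧ B.card ≤ K ∧
      n/8 ≤ q + 2*(n - (A.card - B.card)) ∧
      (G B).card ≤ r ^ B.card * 2 ^ m := by
    intro B hB
    have hBI : B ∈ I := Finset.mem_of_mem_erase hB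
    have hBne : B ≠ ∅ := Finset.ne_of_mem_erase hB
    have hBA : B ⊆ A := Finset.mem_powerset.1 (Finset.mem_filter.1 hBI).1
    have hBK : B.card ≤ K := (Finset.mem_filter.1 hBI).2
    have hBnonempty : B.Nonempty := Finset.nonempty_iff_ne_empty.2 hBne
    have hB1 : 1 ≤ B.card := Finset.card_pos.2 hBnonempty
    set x₀ := B.min' hBnonempty with hx₀def
    have hx₀B : x₀ ∈ B := B.min'_mem hBnonempty
    have hx₀A : x₀ ∈ A := hBA hx₀B
    have hx₀Icc := hA hx₀A
    obtain ⟨hx₀1, hx₀n⟩ := Finset.mem_Icc.1 hx₀Icc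
    have hABIcc : A \ B ⊆ Finset.Icc 1 n := fun y hy => hA (Finset.mem_sdiff.1 hy).1
    have hcardIccAB : ((Finset.Icc 1 n) \ (A \ B)).card = n - (A.card - B.card) := by
      rw [Finset.card_sdiff_of_subset hABIcc, Finset.card_sdiff_of_subset hBA, Nat.card_Icc]
      omega
    have hGBcard : ∀ m : ℕ,
        Nat.card {c : A → Fin r // RainbowAPFree A c ∧
          ∀ x : A, (c x ∉ ({i, j} : Finset (Fin r)) ↔ (x : ℕ) ∈ B)} ≤ r ^ B.card * 2 ^ m →
        (G B).card ≤ r ^ B.card * 2 ^ m := by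
      intro m h
      calc (G B).card = Nat.card {c : A → Fin r // RainbowAPFree A c ∧
          ∀ x : A, (c x ∉ ({i, j} : Finset (Fin r)) ↔ (x : ℕ) ∈ B)} :=
            (natCard_subtype_eq_filter _).symm
      _ ≤ _ := h
    by_cases hdir : x₀ ≤ n/2
    · -- forward direction
      have hinj1 : Set.InjOn (fun d => x₀ + d) ↑(Finset.Ioc (n/8) (2*(n/8))) := by
        intro a _ b _ h; simp only at h; omega
      have hinj2 : Set.InjOn (fun d => x₀ + 2*d) ↑(Finset.Ioc (n/8) (2*(n/8))) := by
        intro a _ b _ h; simp only at h; omega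
      have hdisj : ∀ d ∈ Finset.Ioc (n/8) (2*(n/8)), ∀ d' ∈ Finset.Ioc (n/8) (2*(n/8)),
          (fun d => x₀ + d) d ≠ (fun d => x₀ + 2*d) d' := by
        intro d hd d' hd'
        obtain ⟨h1, h2⟩ := Finset.mem_Ioc.1 hd
        obtain ⟨h1', h2'⟩ := Finset.mem_Ioc.1 hd'
        simp only
        omega
      have hap : ∀ d ∈ Finset.Ioc (n/8) (2*(n/8)), ∀ c : A → Fin r, RainbowAPFree A c →
          ∀ (h0 : x₀ ∈ A) (h1 : (fun d => x₀ + d) d ∈ A) (h2 : (fun d => x₀ + 2*d) d ∈ A),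
            c ⟨x₀, h0⟩ ≠ c ⟨(fun d => x₀ + d) d, h1⟩ →
            c ⟨x₀, h0⟩ ≠ c ⟨(fun d => x₀ + 2*d) d, h2⟩ →
            c ⟨(fun d => x₀ + d) d, h1⟩ = c ⟨(fun d => x₀ + 2*d) d, h2⟩ := by
        intro d hd c hc h0 h1 h2 hne1 hne2
        obtain ⟨hd1, hd2⟩ := Finset.mem_Ioc.1 hd
        have hdpos : 0 < d := by omega
        rcases hc x₀ d hdpos h0 h1 h2 with h | h | h
        · exact absurd h hne1
        · exact h
        · exact absurd h hne2
      have hrange : ∀ d ∈ Finset.Ioc (n/8) (2*(n/8)),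
          (fun d => x₀ + d) d ∈ Finset.Icc 1 n ∧ (fun d => x₀ + 2*d) d ∈ Finset.Icc 1 n := by
        intro d hd
        obtain ⟨h1, h2⟩ := Finset.mem_Ioc.1 hd
        exact ⟨Finset.mem_Icc.2 (show 1 ≤ x₀ + d ∧ x₀ + d ≤ n by omega),
          Finset.mem_Icc.2 (show 1 ≤ x₀ + 2*d ∧ x₀ + 2*d ≤ n by omega)⟩
      have haux := aux_filter_card (Finset.Ioc (n/8) (2*(n/8))) (Finset.Icc 1 n) (A \ B)
        (fun d => x₀ + d) (fun d => x₀ + 2*d) hinj1 hinj2 hrange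
      rw [Nat.card_Ioc, hcardIccAB] at haux
      have hqbound : n/8 ≤ ((Finset.Ioc (n/8) (2*(n/8))).filter
          (fun d => (fun d => x₀ + d) d ∈ A \ B ∧ (fun d => x₀ + 2*d) d ∈ A \ B)).card
          + 2*(n - (A.card - B.card)) := by beta_reduce; omega
      obtain ⟨m, hms, hcount⟩ := lemB (n := n) A B hBA i j hij x₀ hx₀B
        (fun d => x₀ + d) (fun d => x₀ + 2*d) (Finset.Ioc (n/8) (2*(n/8))) hinj2 hdisj hap
      refine ⟨_, m, hms, hB1, hBK, hqbound, hGBcard m hcount⟩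
    · -- backward direction
      have h4D : 4*(n/8) ≤ n/2 := by omega
      have hinj1 : Set.InjOn (fun d => x₀ - 2*d) ↑(Finset.Ioc (n/8) (2*(n/8))) := by
        intro a ha b hb h
        simp only [Finset.coe_Ioc, Set.mem_Ioc] at ha hb
        simp only at h
        omega
      have hinj2 : Set.InjOn (fun d => x₀ - d) ↑(Finset.Ioc (n/8) (2*(n/8))) := by
        intro a ha b hb h
        simp only [Finset.coe_Ioc, Set.mem_Ioc] at ha hb
        simp only at h
        omega
      have hdisj : ∀ d ∈ Finset.Ioc (n/8) (2*(n/8)), ∀ d' ∈ Finset.Ioc (n/8) (2*(n/8)),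
          (fun d => x₀ - 2*d) d ≠ (fun d => x₀ - d) d' := by
        intro d hd d' hd'
        obtain ⟨h1, h2⟩ := Finset.mem_Ioc.1 hd
        obtain ⟨h1', h2'⟩ := Finset.mem_Ioc.1 hd'
        simp only
        omega
      have hap : ∀ d ∈ Finset.Ioc (n/8) (2*(n/8)), ∀ c : A → Fin r, RainbowAPFree A c →
          ∀ (h0 : x₀ ∈ A) (h1 : (fun d => x₀ - 2*d) d ∈ A) (h2 : (fun d => x₀ - d) d ∈ A),
            c ⟨x₀, h0⟩ ≠ c ⟨(fun d => x₀ - 2*d) d, h1⟩ →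
            c ⟨x₀, h0⟩ ≠ c ⟨(fun d => x₀ - d) d, h2⟩ →
            c ⟨(fun d => x₀ - 2*d) d, h1⟩ = c ⟨(fun d => x₀ - d) d, h2⟩ := by
        intro d hd c hc h0 h1 h2 hne1 hne2
        replace hne1 : c ⟨x₀, h0⟩ ≠ c ⟨x₀ - 2*d, h1⟩ := hne1
        replace hne2 : c ⟨x₀, h0⟩ ≠ c ⟨x₀ - d, h2⟩ := hne2
        show c ⟨x₀ - 2*d, h1⟩ = c ⟨x₀ - d, h2⟩
        obtain ⟨hd1, hd2⟩ := Finset.mem_Ioc.1 hd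
        have hdpos : 0 < d := by omega
        have e : x₀ - 2*d + d = x₀ - d := by omega
        have e2 : x₀ - 2*d + 2*d = x₀ := by omega
        have h2' : x₀ - 2*d + d ∈ A := by rw [e]; exact h2
        have h3' : x₀ - 2*d + 2*d ∈ A := by rw [e2]; exact h0
        have ce1 : c ⟨x₀ - 2*d + d, h2'⟩ = c ⟨x₀ - d, h2⟩ := by
          congr 1; exact Subtype.ext e
        have ce2 : c ⟨x₀ - 2*d + 2*d, h3'⟩ = c ⟨x₀, h0⟩ := by
          congr 1; exact Subtype.ext e2
        rcases hc (x₀ - 2*d) d hdpos h1 h2' h3' with h | h | h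
        · rw [← ce1]; exact h
        · exfalso; apply hne2
          rw [← ce1, h, ce2]
        · exfalso; apply hne1
          rw [← ce2, h]
      have hrange : ∀ d ∈ Finset.Ioc (n/8) (2*(n/8)),
          (fun d => x₀ - 2*d) d ∈ Finset.Icc 1 n ∧ (fun d => x₀ - d) d ∈ Finset.Icc 1 n := by
        intro d hd
        obtain ⟨h1, h2⟩ := Finset.mem_Ioc.1 hd
        exact ⟨Finset.mem_Icc.2 (show 1 ≤ x₀ - 2*d ∧ x₀ - 2*d ≤ n by omega),
          Finset.mem_Icc.2 (show 1 ≤ x₀ - d ∧ x₀ - d ≤ n by omega)⟩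
      have haux := aux_filter_card (Finset.Ioc (n/8) (2*(n/8))) (Finset.Icc 1 n) (A \ B)
        (fun d => x₀ - 2*d) (fun d => x₀ - d) hinj1 hinj2 hrange
      rw [Nat.card_Ioc, hcardIccAB] at haux
      have hqbound : n/8 ≤ ((Finset.Ioc (n/8) (2*(n/8))).filter
          (fun d => (fun d => x₀ - 2*d) d ∈ A \ B ∧ (fun d => x₀ - d) d ∈ A \ B)).card
          + 2*(n - (A.card - B.card)) := by beta_reduce; omega
      obtain ⟨m, hms, hcount⟩ := lemB (n := n) A B hBA i j hij x₀ hx₀B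
        (fun d => x₀ - 2*d) (fun d => x₀ - d) (Finset.Ioc (n/8) (2*(n/8))) hinj2 hdisj hap
      refine ⟨_, m, hms, hB1, hBK, hqbound, hGBcard m hcount⟩
  -- the real-number estimates
  have hrpos : (0:ℝ) < r := by
    have : 0 < r := by omega
    exact_mod_cast this
  have hLr0 : 0 ≤ Real.logb 2 r :=
    Real.logb_nonneg one_lt_two (by exact_mod_cast (by omega : 1 ≤ r))
  set E₀ : ℝ := (K:ℝ) * Real.logb 2 r - 1 - (↑(n/8):ℝ) + 2*(ξ*n) + 2*(K:ℝ) with hE0def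
  have hGB : ∀ B ∈ I.erase ∅, ((G B).card : ℝ) ≤ (2:ℝ)^((A.card:ℝ) + E₀) := by
    intro B hB
    obtain ⟨q, m, hms, hB1, hBK, hqb, hcnt⟩ := key B hB
    have hcntR : ((G B).card : ℝ) ≤ (r:ℝ)^(B.card) * (2:ℝ)^(m:ℕ) := by exact_mod_cast hcnt
    have heq1 : (r:ℝ)^(B.card) = (2:ℝ)^((B.card:ℝ) * Real.logb 2 r) :=
      pow_eq_rpow_logb _ hrpos _
    have heq2 : ((2:ℝ))^(m:ℕ) = (2:ℝ)^((m:ℝ)) := (Real.rpow_natCast 2 m).symm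
    have hexp : (B.card:ℝ) * Real.logb 2 r + m ≤ (A.card:ℝ) + E₀ := by
      have hmR : (m:ℝ) = (A.card:ℝ) - B.card - q := by
        have h := hms
        have : (A.card:ℝ) = (B.card:ℝ) + q + m := by exact_mod_cast h
        linarith
      have hkK : (B.card:ℝ) ≤ (K:ℝ) := by exact_mod_cast hBK
      have hk1 : (1:ℝ) ≤ (B.card:ℝ) := by exact_mod_cast hB1
      have hkLr : (B.card:ℝ) * Real.logb 2 r ≤ (K:ℝ) * Real.logb 2 r :=
        mul_le_mul_of_nonneg_right hkK hLr0
      have hBA : B ⊆ A := Finset.mem_powerset.1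
        (Finset.mem_filter.1 (Finset.mem_of_mem_erase hB)).1
      have hkA : B.card ≤ A.card := Finset.card_le_card hBA
      have hsubcast : ((n - (A.card - B.card) : ℕ):ℝ) = ξ*n + B.card := by
        rw [Nat.cast_sub (le_trans (Nat.sub_le _ _) hAn), Nat.cast_sub hkA, hξn]
        ring
      have hqR : ((n/8 : ℕ):ℝ) ≤ (q:ℝ) + 2*(ξ*n + (B.card:ℝ)) := by
        have hcast2 : ((n/8:ℕ):ℝ) ≤ (q:ℝ) + 2*((n - (A.card - B.card) : ℕ):ℝ) := by
          exact_mod_cast hqb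
        rw [hsubcast] at hcast2
        exact hcast2
      rw [hE0def, hmR]
      linarith
    calc ((G B).card : ℝ) ≤ (r:ℝ)^(B.card) * (2:ℝ)^(m:ℕ) := hcntR
    _ = (2:ℝ)^((B.card:ℝ) * Real.logb 2 r + m) := by
        rw [heq1, heq2, ← Real.rpow_add (by norm_num : (0:ℝ) < 2)]
    _ ≤ (2:ℝ)^((A.card:ℝ) + E₀) := Real.rpow_le_rpow_of_exponent_le one_le_two hexp
  have hIcard : (I.card : ℝ) ≤ (2:ℝ)^(Real.logb 2 ((K:ℝ)+1) + (K:ℝ) * Real.logb 2 n) := by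
    have hInat : I.card ≤ (K+1) * n^K := by
      have hsub : I ⊆ (Finset.range (K+1)).biUnion (fun k => Finset.powersetCard k A) := by
        intro B hB
        obtain ⟨hBA', hBK'⟩ := Finset.mem_filter.1 hB
        exact Finset.mem_biUnion.2 ⟨B.card, Finset.mem_range.2 (by omega),
          Finset.mem_powersetCard.2 ⟨Finset.mem_powerset.1 hBA', rfl⟩⟩
      calc I.card ≤ _ := Finset.card_le_card hsub
      _ ≤ ∑ k ∈ Finset.range (K+1), (Finset.powersetCard k A).card := Finset.card_biUnion_le
      _ ≤ ∑ _k ∈ Finset.range (K+1), n^K := by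
          apply Finset.sum_le_sum
          intro k hk
          rw [Finset.card_powersetCard]
          calc A.card.choose k ≤ A.card^k := Nat.choose_le_pow _ _
          _ ≤ n^k := Nat.pow_le_pow_left hAn k
          _ ≤ n^K := Nat.pow_le_pow_right hn1 (by
              have := Finset.mem_range.1 hk
              omega)
      _ = (K+1) * n^K := by rw [Finset.sum_const, Finset.card_range, smul_eq_mul]
    have h1 : (I.card : ℝ) ≤ ((K:ℝ)+1) * (n:ℝ)^K := by exact_mod_cast hInat
    have h2 : ((K:ℝ)+1) = (2:ℝ)^(Real.logb 2 ((K:ℝ)+1)) :=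
      (Real.rpow_logb (by norm_num) (by norm_num) (by positivity)).symm
    have h3 : (n:ℝ)^K = (2:ℝ)^((K:ℝ) * Real.logb 2 n) := pow_eq_rpow_logb _ hnR0 _
    calc (I.card : ℝ) ≤ ((K:ℝ)+1) * (n:ℝ)^K := h1
    _ = (2:ℝ)^(Real.logb 2 ((K:ℝ)+1)) * (2:ℝ)^((K:ℝ) * Real.logb 2 n) := by rw [← h2, h3]
    _ = (2:ℝ)^(Real.logb 2 ((K:ℝ)+1) + (K:ℝ) * Real.logb 2 n) :=
        (Real.rpow_add (by norm_num) _ _).symm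
  have hsum : ((∑ B ∈ I.erase ∅, (G B).card : ℕ) : ℝ) ≤
      (2:ℝ)^(Real.logb 2 ((K:ℝ)+1) + (K:ℝ) * Real.logb 2 n) * (2:ℝ)^((A.card:ℝ) + E₀) := by
    rw [Nat.cast_sum]
    calc ∑ B ∈ I.erase ∅, ((G B).card:ℝ) ≤ ∑ _B ∈ I.erase ∅, (2:ℝ)^((A.card:ℝ)+E₀) :=
        Finset.sum_le_sum hGB
    _ = ((I.erase ∅).card : ℝ) * (2:ℝ)^((A.card:ℝ)+E₀) := by
        rw [Finset.sum_const, nsmul_eq_mul]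
    _ ≤ (I.card:ℝ) * (2:ℝ)^((A.card:ℝ)+E₀) := by
        apply mul_le_mul_of_nonneg_right _ (by positivity)
        exact_mod_cast Finset.card_le_card (Finset.erase_subset _ _)
    _ ≤ _ := mul_le_mul_of_nonneg_right hIcard (by positivity)
  have hnm := numeric_main r n hr hn ξ (le_of_lt hξ0) (by
    rw [hδ] at hξlt
    exact le_of_lt hξlt)
  rw [← hKdef] at hnm
  have hfinalexp : (2:ℝ)^(Real.logb 2 ((K:ℝ)+1) + (K:ℝ) * Real.logb 2 n) *
      (2:ℝ)^((A.card:ℝ) + E₀) ≤ (2:ℝ)^((A.card:ℝ)) * (2:ℝ)^(-(n:ℝ)/240) := by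
    rw [← Real.rpow_add (by norm_num : (0:ℝ) < 2),
        ← Real.rpow_add (by norm_num : (0:ℝ) < 2)]
    apply Real.rpow_le_rpow_of_exponent_le one_le_two
    rw [hE0def]
    linarith [hnm]
  have hGempty : ((G ∅).card : ℝ) ≤ (2:ℝ)^((A.card:ℝ)) := by
    have hnat : (G ∅).card ≤ 2^(A.card) := by
      have hsub : G ∅ ⊆ Fintype.piFinset (fun _ : {x // x ∈ A} => ({i,j} : Finset (Fin r))) := by
        intro c hc
        rw [Fintype.mem_piFinset]
        intro x
        have h := (Finset.mem_filter.1 hc).2.2 x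
        by_contra hcon
        simpa using h.1 hcon
      calc (G ∅).card ≤ _ := Finset.card_le_card hsub
      _ = 2^(A.card) := by
          rw [Fintype.card_piFinset]
          simp only [Finset.card_pair hij]
          rw [Finset.prod_const, Finset.card_univ, Fintype.card_coe]
    calc ((G ∅).card : ℝ) ≤ ((2^A.card : ℕ):ℝ) := by exact_mod_cast hnat
    _ = (2:ℝ)^((A.card:ℝ)) := by
        push_cast
        exact (Real.rpow_natCast 2 _).symm
  have hNatF : Nat.card {c : A → Fin r // RainbowAPFree A c ∧
      ∃ P : ℕ → Finset (Fin r), GoodTemplate n A P ∧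
        (1 - 2 * δ) * n ≤
          (((Finset.Icc 1 n).filter fun x => P x = {i, j}).card : ℝ) ∧
        ∀ (x : ℕ) (hx : x ∈ A), c ⟨x, hx⟩ ∈ P x} = F.card :=
    natCard_subtype_eq_filter _
  rw [hNatF]
  have hFR : (F.card : ℝ) ≤ (2:ℝ)^((A.card:ℝ)) + (2:ℝ)^((A.card:ℝ)) * (2:ℝ)^(-(n:ℝ)/240) := by
    have h1 : (F.card:ℝ) ≤ ((G ∅).card:ℝ) + ((∑ B ∈ I.erase ∅, (G B).card : ℕ):ℝ) := by
      exact_mod_cast hFbound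
    have h2 := le_trans hsum hfinalexp
    linarith [hGempty]
  calc (F.card : ℝ) ≤ _ := hFR
  _ = (2:ℝ)^A.card * (1 + (2:ℝ)^(-(n:ℝ)/240)) := by
      rw [← Real.rpow_natCast (2:ℝ) A.card]
      ring
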